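/- Let d < b and a < c (anti-coordination game), so that x* = (d−b)/(a+d−b−c) ∈ (0,1), and let x be a solution of the uncontrolled replicator equation with x(0) ∈ (0,1). Then x(t) → x* as t → ∞. -/

import Mathlib

/-- `x` is a solution of the uncontrolled replicator equation
`ẋ = x(1−x)((a+d−b−c)x + b − d)` on `[0,∞)`. -/
def IsReplicatorSolution (a b c d : ℝ) (x : ℝ → ℝ) : Prop :=
  ∀ t : ℝ, 0 ≤ t →
    HasDerivAt x (x t * (1 - x t) * ((a + d - b - c) * x t + (b - d))) t

open Set Metric Filter



lemma cubic_lipschitzOnWith (A B R : ℝ) :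
    ∃ K : NNReal, LipschitzOnWith K (fun y : ℝ => y * (1 - y) * (A * y + B))
      (Metric.closedBall 0 R) := by
  set Kr : ℝ := |A| * (3 * R ^ 2) + (|A| + |B|) * (2 * R) + |B| with hKrdef
  refine ⟨Real.toNNReal Kr, ?_⟩
  rw [lipschitzOnWith_iff_dist_le_mul]
  intro y hy z hz
  rw [Real.dist_eq, Real.dist_eq]
  have hy' : |y| ≤ R := by simpa [Real.dist_eq] using hy
  have hz' : |z| ≤ R := by simpa [Real.dist_eq] using hz
  have hR : 0 ≤ R := le_trans (abs_nonneg y) hy'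
  have hKr0 : 0 ≤ Kr := by positivity
  rw [Real.coe_toNNReal _ hKr0]
  have key : y * (1 - y) * (A * y + B) - z * (1 - z) * (A * z + B)
      = (-(A * (y ^ 2 + y * z + z ^ 2)) + (A - B) * (y + z) + B) * (y - z) := by ring
  rw [key, abs_mul]
  refine mul_le_mul_of_nonneg_right ?_ (abs_nonneg _)
  have hy1 := abs_le.mp hy'
  have hz1 := abs_le.mp hz'
  have hyz : |y * z| ≤ R * R := by
    rw [abs_mul]; exact mul_le_mul hy' hz' (abs_nonneg z) hR
  have hyz1 := abs_le.mp hyz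
  have hs1 : |y ^ 2 + y * z + z ^ 2| ≤ 3 * R ^ 2 := by
    rw [abs_le]; constructor <;> nlinarith [sq_nonneg y, sq_nonneg z, sq_nonneg R]
  have hs2 : |y + z| ≤ 2 * R := by
    calc |y + z| ≤ |y| + |z| := abs_add_le _ _
    _ ≤ 2 * R := by linarith
  have hAB : |A - B| ≤ |A| + |B| := abs_sub _ _
  calc |(-(A * (y ^ 2 + y * z + z ^ 2)) + (A - B) * (y + z) + B)|
      ≤ |(-(A * (y ^ 2 + y * z + z ^ 2)) + (A - B) * (y + z))| + |B| := abs_add_le _ _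
    _ ≤ |(-(A * (y ^ 2 + y * z + z ^ 2)))| + |(A - B) * (y + z)| + |B| := by
        gcongr; exact abs_add_le _ _
    _ = |A| * |y ^ 2 + y * z + z ^ 2| + |A - B| * |y + z| + |B| := by
        rw [abs_neg, abs_mul, abs_mul]
    _ ≤ |A| * (3 * R ^ 2) + (|A| + |B|) * (2 * R) + |B| := by
        have h1 : |A - B| * |y + z| ≤ (|A| + |B|) * (2 * R) :=
          mul_le_mul hAB hs2 (abs_nonneg _) (by positivity)
        have h2 : |A| * |y ^ 2 + y * z + z ^ 2| ≤ |A| * (3 * R ^ 2) :=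
          mul_le_mul_of_nonneg_left hs1 (abs_nonneg _)
        linarith
    _ = Kr := rfl


lemma replicator_eqOn {a b c d : ℝ} {x : ℝ → ℝ} (hsol : IsReplicatorSolution a b c d x)
    {e : ℝ} (he : e * (1 - e) * ((a + d - b - c) * e + (b - d)) = 0)
    {t1 : ℝ} (ht1 : 0 ≤ t1) {t0 : ℝ} (ht0 : t0 ∈ Icc 0 t1) (hx : x t0 = e) :
    EqOn x (fun _ => e) (Icc 0 t1) := by
  set A := a + d - b - c
  set B := b - d
  have hxc : ContinuousOn x (Icc 0 t1) := fun t ht =>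
    ((hsol t ht.1).continuousAt).continuousWithinAt
  obtain ⟨C, hC⟩ := isCompact_Icc.exists_bound_of_continuousOn hxc
  set R : ℝ := max C |e| with hRdef
  obtain ⟨K, hK⟩ := cubic_lipschitzOnWith A B R
  have hmem : ∀ t ∈ Icc (0:ℝ) t1, x t ∈ Metric.closedBall (0:ℝ) R := by
    intro t ht
    simp only [Metric.mem_closedBall, Real.dist_eq, sub_zero]
    exact (hC t ht).trans (le_max_left _ _)
  have hemem : e ∈ Metric.closedBall (0:ℝ) R := by
    simp only [Metric.mem_closedBall, Real.dist_eq, sub_zero]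
    exact le_max_right _ _
  have hgc : ContinuousOn (fun _ : ℝ => e) (Icc 0 t1) := continuousOn_const
  rcases eq_or_lt_of_le ht0.1 with h0 | h0
  · -- t0 = 0 : forward uniqueness
    exact ODE_solution_unique_of_mem_Icc_right
      (v := fun _ y => y * (1 - y) * (A * y + B)) (s := fun _ => Metric.closedBall 0 R)
      (fun _ _ => hK) hxc
      (fun t ht => ((hsol t ht.1).hasDerivWithinAt))
      (fun t ht => hmem t (Ico_subset_Icc_self ht))
      hgc
      (fun t ht => by simpa [he] using (hasDerivWithinAt_const t (Ici t) e))
      (fun t ht => hemem)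
      (by rw [← h0] at hx; exact hx)
  · -- general t0 : do both directions
    have hleft : EqOn x (fun _ => e) (Icc 0 t0) :=
      ODE_solution_unique_of_mem_Icc_left
        (v := fun _ y => y * (1 - y) * (A * y + B)) (s := fun _ => Metric.closedBall 0 R)
        (fun _ _ => hK) (hxc.mono (Icc_subset_Icc_right ht0.2))
        (fun t ht => ((hsol t ht.1.le).hasDerivWithinAt))
        (fun t ht => hmem t ⟨ht.1.le, ht.2.trans ht0.2⟩)
        continuousOn_const
        (fun t ht => by simpa [he] using (hasDerivWithinAt_const t (Iic t) e))
        (fun t ht => hemem)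
        hx
    have hright : EqOn x (fun _ => e) (Icc t0 t1) :=
      ODE_solution_unique_of_mem_Icc_right
        (v := fun _ y => y * (1 - y) * (A * y + B)) (s := fun _ => Metric.closedBall 0 R)
        (fun _ _ => hK) (hxc.mono (Icc_subset_Icc_left ht0.1))
        (fun t ht => ((hsol t (ht0.1.trans ht.1)).hasDerivWithinAt))
        (fun t ht => hmem t ⟨ht0.1.trans ht.1, ht.2.le⟩)
        continuousOn_const
        (fun t ht => by simpa [he] using (hasDerivWithinAt_const t (Ici t) e))
        (fun t ht => hemem)
        hx
    intro t ht
    rcases le_total t t0 with h | h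
    · exact hleft ⟨ht.1, h⟩
    · exact hright ⟨h, ht.2⟩

lemma replicator_from_below (a b c d : ℝ) (hdb : d < b) (hac : a < c)
    (x : ℝ → ℝ) (hsol : IsReplicatorSolution a b c d x)
    (hx0 : x 0 ∈ Set.Ioo (0 : ℝ) 1)
    (hle : x 0 ≤ (d - b) / (a + d - b - c)) :
    Filter.Tendsto x Filter.atTop (nhds ((d - b) / (a + d - b - c))) := by
  set A : ℝ := a + d - b - c with hAdef
  set B : ℝ := b - d with hBdef
  set p : ℝ := (d - b) / A with hpdef
  have hA : A < 0 := by simp only [hAdef]; linarith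
  have hB : 0 < B := by simp only [hBdef]; linarith
  have hApm : A * p = d - b := by
    rw [hpdef, mul_div_assoc']; exact mul_div_cancel_left₀ _ hA.ne
  have hApB : A * p + B = 0 := by rw [hApm, hBdef]; ring
  have hp0 : 0 < p := div_pos_of_neg_of_neg (by linarith) hA
  have hp1 : p < 1 := by
    have h2 : d - b - A = c - a := by rw [hAdef]; ring
    have h1 : p - 1 = (c - a) / A := by rw [hpdef, div_sub_one hA.ne, h2]
    have : (c - a) / A < 0 := div_neg_of_pos_of_neg (by linarith) hA
    linarith [h1 ▸ this]
  have hep : p * (1 - p) * (A * p + B) = 0 := by rw [hApB]; ring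
  have hxc : ContinuousOn x (Ici 0) := fun t ht =>
    ((hsol t ht).continuousAt).continuousWithinAt
  rcases eq_or_lt_of_le hle with heq | hlt
  · -- x 0 = p : constant solution
    have : ∀ t : ℝ, 0 ≤ t → x t = p := fun t ht =>
      replicator_eqOn hsol hep ht (left_mem_Icc.mpr ht) heq ⟨ht, le_refl t⟩
    exact Tendsto.congr' (by filter_upwards [eventually_ge_atTop (0:ℝ)] with t ht
      using (this t ht).symm) tendsto_const_nhds
  -- x 0 < p
  have hbar0 : ∀ t : ℝ, 0 ≤ t → 0 < x t := by
    intro t ht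
    by_contra h
    push_neg at h
    have h0mem : (0:ℝ) ∈ Icc (x t) (x 0) := ⟨h, hx0.1.le⟩
    obtain ⟨t0, ht0, hxt0⟩ := intermediate_value_Icc' ht (hxc.mono (fun s hs => hs.1)) h0mem
    have := replicator_eqOn hsol (by ring) ht ht0 hxt0
      (show (0:ℝ) ∈ Icc 0 t from ⟨le_refl 0, ht⟩)
    simp only at this
    exact absurd this (ne_of_gt hx0.1)
  have hbarp : ∀ t : ℝ, 0 ≤ t → x t < p := by
    intro t ht
    by_contra h
    push_neg at h
    have hpmem : p ∈ Icc (x 0) (x t) := ⟨hlt.le, h⟩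
    obtain ⟨t0, ht0, hxt0⟩ := intermediate_value_Icc ht (hxc.mono (fun s hs => hs.1)) hpmem
    have := replicator_eqOn hsol hep ht ht0 hxt0
      (show (0:ℝ) ∈ Icc 0 t from ⟨le_refl 0, ht⟩)
    simp only at this
    exact absurd this (ne_of_lt hlt)
  -- derivative positive
  have hpos : ∀ t : ℝ, 0 ≤ t → 0 < x t * (1 - x t) * (A * x t + B) := by
    intro t ht
    have h1 := hbar0 t ht
    have h2 := hbarp t ht
    have h3 : A * x t + B > 0 := by
      nlinarith [mul_pos (neg_pos.mpr hA) (sub_pos.mpr h2)]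
    have h4 : 1 - x t > 0 := by linarith
    exact mul_pos (mul_pos h1 h4) h3
  -- strictly monotone on Ici 0
  have hmono : StrictMonoOn x (Ici 0) := by
    apply strictMonoOn_of_deriv_pos (convex_Ici 0) hxc
    intro t ht
    rw [interior_Ici] at ht
    rw [(hsol t ht.le).deriv]
    exact hpos t ht.le
  -- monotone bounded → converges to sup
  set g : ℝ → ℝ := fun t => x (max t 0) with hgdef
  have hgmono : Monotone g := fun s t hst =>
    hmono.monotoneOn (le_max_right s 0) (le_max_right t 0) (max_le_max hst le_rfl)
  have hgbdd : BddAbove (Set.range g) := by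
    refine ⟨p, ?_⟩
    rintro _ ⟨t, rfl⟩
    exact (hbarp _ (le_max_right t 0)).le
  set L : ℝ := ⨆ t, g t with hLdef
  have hgL : Tendsto g atTop (nhds L) := tendsto_atTop_ciSup hgmono hgbdd
  have hgx : ∀ᶠ t in atTop, g t = x t := by
    filter_upwards [eventually_ge_atTop (0:ℝ)] with t ht
    simp [hgdef, max_eq_left ht]
  have hxL : Tendsto x atTop (nhds L) := Tendsto.congr' hgx hgL
  have hle_L : ∀ t : ℝ, 0 ≤ t → x t ≤ L := by
    intro t ht
    have := le_ciSup hgbdd t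
    rwa [show g t = x t by simp [hgdef, max_eq_left ht]] at this
  have hLp : L ≤ p := ciSup_le fun t => (hbarp _ (le_max_right t 0)).le
  have hx0L : x 0 ≤ L := hle_L 0 le_rfl
  have hx0le : ∀ t : ℝ, 0 ≤ t → x 0 ≤ x t := by
    intro t ht
    rcases eq_or_lt_of_le ht with h | h
    · rw [← h]
    · exact (hmono (mem_Ici.mpr le_rfl) (mem_Ici.mpr ht) h).le
  -- claim L = p
  have hLeqp : L = p := by
    by_contra hne
    have hLltp : L < p := lt_of_le_of_ne hLp hne
    -- min of v on [x 0, L]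
    have hvc : Continuous (fun y : ℝ => y * (1 - y) * (A * y + B)) :=
      (continuous_id.mul (continuous_const.sub continuous_id)).mul
        ((continuous_const.mul continuous_id).add continuous_const)
    obtain ⟨m, hm, hmin⟩ := isCompact_Icc.exists_isMinOn (nonempty_Icc.mpr hx0L)
      hvc.continuousOn
    set ε : ℝ := m * (1 - m) * (A * m + B) with hεdef
    have hε : 0 < ε := by
      have h1 : 0 < m := lt_of_lt_of_le hx0.1 hm.1
      have h2 : m < p := lt_of_le_of_lt hm.2 hLltp
      have h3 : A * m + B > 0 := by
        nlinarith [mul_pos (neg_pos.mpr hA) (sub_pos.mpr h2)]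
      have h4 : 1 - m > 0 := by linarith
      exact mul_pos (mul_pos h1 h4) h3
    have hder_ge : ∀ t : ℝ, 0 ≤ t → ε ≤ x t * (1 - x t) * (A * x t + B) :=
      fun t ht => hmin ⟨hx0le t ht, hle_L t ht⟩
    -- h t = x t - (ε/2) t strictly increasing on Ici 0
    have hhmono : StrictMonoOn (fun t => x t - ε / 2 * t) (Ici 0) := by
      apply strictMonoOn_of_deriv_pos (convex_Ici 0)
      · exact ContinuousOn.sub hxc
          (Continuous.continuousOn (continuous_const.mul continuous_id))
      · intro t ht
        rw [interior_Ici] at ht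
        have hd : HasDerivAt (fun t => x t - ε / 2 * t)
            (x t * (1 - x t) * (A * x t + B) - ε / 2) t := by
          exact ((hsol t ht.le).sub ((hasDerivAt_id t).const_mul (ε / 2))).congr_deriv (by simp only [mul_one, hAdef, hBdef])
        rw [hd.deriv]
        have hvge : ε ≤ x t * (1 - x t) * (A * x t + B) := hder_ge t ht.le
        have hε2 : 0 < ε / 2 := by linarith
        show (0:ℝ) < x t * (1 - x t) * (A * x t + B) - ε / 2
        exact sub_pos.mpr (lt_of_lt_of_le (half_lt_self hε) hvge)
    set T : ℝ := (L - x 0) / (ε / 2) + 1 with hTdef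
    have hT0 : 0 < T := by
      have hd : 0 ≤ (L - x 0) / (ε / 2) := div_nonneg (by linarith) (by linarith)
      simp only [hTdef]; linarith
    have := hhmono (mem_Ici.mpr le_rfl) (mem_Ici.mpr hT0.le) hT0
    simp only [mul_zero, sub_zero] at this
    have hxT : x T ≤ L := hle_L T hT0.le
    have : x 0 - 0 < x T - ε / 2 * T := by simpa using this
    have hεT : ε / 2 * T = L - x 0 + ε / 2 := by
      rw [hTdef, mul_add, mul_one, mul_div_cancel₀ _ (ne_of_gt (by linarith : (0:ℝ) < ε / 2))]
    linarith
  rw [hLeqp] at hxL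
  exact hxL

/-- In an anti-coordination game (`d < b`, `a < c`), `x* = (d−b)/(a+d−b−c) ∈ (0,1)`, and
any solution of the uncontrolled replicator equation with `x(0) ∈ (0,1)` converges
to `x*`. -/
theorem replicator_anticoordination (a b c d : ℝ) (hdb : d < b) (hac : a < c)
    (x : ℝ → ℝ) (hsol : IsReplicatorSolution a b c d x)
    (hx0 : x 0 ∈ Set.Ioo (0 : ℝ) 1) :
    (d - b) / (a + d - b - c) ∈ Set.Ioo (0 : ℝ) 1 ∧
    Filter.Tendsto x Filter.atTop (nhds ((d - b) / (a + d - b - c))) := by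
  have hA : a + d - b - c < 0 := by linarith
  have hp0 : 0 < (d - b) / (a + d - b - c) :=
    div_pos_of_neg_of_neg (by linarith) hA
  have hp1 : (d - b) / (a + d - b - c) < 1 := by
    have h2 : d - b - (a + d - b - c) = c - a := by ring
    have h1 : (d - b) / (a + d - b - c) - 1 = (c - a) / (a + d - b - c) := by
      rw [div_sub_one hA.ne, h2]
    have : (c - a) / (a + d - b - c) < 0 := div_neg_of_pos_of_neg (by linarith) hA
    linarith [h1 ▸ this]
  refine ⟨⟨hp0, hp1⟩, ?_⟩
  rcases le_or_gt (x 0) ((d - b) / (a + d - b - c)) with hle | hgt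
  · exact replicator_from_below a b c d hdb hac x hsol hx0 hle
  · -- apply the lemma to y = 1 - x with the swapped game (d, c, b, a)
    set y : ℝ → ℝ := fun t => 1 - x t with hydef
    have hysol : IsReplicatorSolution d c b a y := by
      intro t ht
      have hd := (hsol t ht).const_sub 1
      refine hd.congr_deriv ?_
      simp only [hydef]
      ring
    have hy0 : y 0 ∈ Set.Ioo (0:ℝ) 1 := by
      constructor <;> simp only [hydef] <;> [linarith [hx0.2]; linarith [hx0.1]]
    have hpeq : (a - c) / (d + a - c - b) = 1 - (d - b) / (a + d - b - c) := by
      have hAe : d + a - c - b = a + d - b - c := by ring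
      have hsum : (a - c) / (a + d - b - c) + (d - b) / (a + d - b - c) = 1 := by
        rw [← add_div, show a - c + (d - b) = a + d - b - c by ring]
        exact div_self hA.ne
      rw [hAe]
      linarith
    have hyle : y 0 ≤ (a - c) / (d + a - c - b) := by
      rw [hpeq]
      simp only [hydef]
      linarith
    have := replicator_from_below d c b a hac hdb y hysol hy0 hyle
    rw [hpeq] at this
    have h2 := (tendsto_const_nhds (x := (1:ℝ)) (f := Filter.atTop)).sub this
    simp only [hydef, sub_sub_cancel] at h2
    convert h2 using 2
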